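/- Any permutation of entries of an m1 × m2 table can be achieved by a sequence of at most m2 column permutations, followed by at most m1 row permutations, followed by at most m2 column permutations (the Rubik Table theorem). -/

import Mathlib

open Finset

lemma rubik_key (m2 : ℕ) : ∀ (n : ℕ) (D : Fin n × Fin m2 → Fin m2),
    (∀ c, (Finset.univ.filter (fun p : Fin n × Fin m2 => D p = c)).card = n) →
    ∃ t : Fin n → Fin m2 → Fin n,
      (∀ j, Function.Bijective (fun i => t i j)) ∧
      (∀ i, Function.Bijective (fun j => D (t i j, j))) := by
  intro n
  induction n with
  | zero =>
    intro D _
    exact ⟨fun i _ => i, fun j => ⟨fun a => a.elim0, fun b => b.elim0⟩,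
      fun i => i.elim0⟩
  | succ n ih =>
    intro D hD
    set T : Fin m2 → Finset (Fin m2) :=
      fun j => Finset.image (fun i => D (i, j)) Finset.univ with hT
    have hall : ∀ S : Finset (Fin m2), S.card ≤ (S.biUnion T).card := by
      intro S
      set P : Finset (Fin (n+1) × Fin m2) := Finset.univ ×ˢ S with hP
      have h1 : P.card ≤ (n+1) * (P.image D).card := by
        apply Finset.card_le_mul_card_image
        intro c _
        calc (P.filter (fun p => D p = c)).card
            ≤ (Finset.univ.filter (fun p : Fin (n+1) × Fin m2 => D p = c)).card :=
              Finset.card_le_card (Finset.filter_subset_filter _ (Finset.subset_univ _))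
          _ = n + 1 := hD c
      have h2 : P.image D ⊆ S.biUnion T := by
        intro c hc
        obtain ⟨p, hp, rfl⟩ := Finset.mem_image.mp hc
        simp only [hP, Finset.mem_product] at hp
        exact Finset.mem_biUnion.mpr ⟨p.2, hp.2, by simp [hT]⟩
      have h3 : P.card = (n+1) * S.card := by simp [hP, Finset.card_product]
      have := h1.trans (Nat.mul_le_mul_left _ (Finset.card_le_card h2))
      rw [h3] at this
      exact Nat.le_of_mul_le_mul_left this (Nat.succ_pos n)
    obtain ⟨f, hfinj, hfmem⟩ :=
      (Finset.all_card_le_biUnion_card_iff_exists_injective T).mp hall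
    have hsel : ∀ j, ∃ i, D (i, j) = f j := by
      intro j
      obtain ⟨i, _, hi⟩ := Finset.mem_image.mp (hfmem j)
      exact ⟨i, hi⟩
    choose s hs using hsel
    have hfbij : Function.Bijective f := Finite.injective_iff_bijective.mp hfinj
    set D' : Fin n × Fin m2 → Fin m2 :=
      fun p => D ((s p.2).succAbove p.1, p.2) with hD'
    have hD'c : ∀ c, (Finset.univ.filter (fun p : Fin n × Fin m2 => D' p = c)).card = n := by
      intro c
      have hsplit :
          (Finset.univ.filter (fun p : Fin (n+1) × Fin m2 => D p = c ∧ p.1 = s p.2)).card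
          + (Finset.univ.filter (fun p : Fin (n+1) × Fin m2 => D p = c ∧ p.1 ≠ s p.2)).card
          = n + 1 := by
        have h := Finset.card_filter_add_card_filter_not
          (s := Finset.univ.filter (fun p : Fin (n+1) × Fin m2 => D p = c))
          (p := fun p => p.1 = s p.2)
        simp only [Finset.filter_filter] at h
        rw [hD c] at h
        exact h
      have hone :
          (Finset.univ.filter (fun p : Fin (n+1) × Fin m2 => D p = c ∧ p.1 = s p.2)).card = 1 := by
        rw [Finset.card_eq_one]
        refine ⟨(s (hfbij.2 c).choose, (hfbij.2 c).choose), ?_⟩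
        ext p
        simp only [Finset.mem_filter, Finset.mem_univ, true_and, Finset.mem_singleton]
        constructor
        · rintro ⟨h1, h2⟩
          have : f p.2 = c := by rw [← hs p.2, ← h2]; exact h1
          have hj : p.2 = (hfbij.2 c).choose := hfinj (by rw [this, (hfbij.2 c).choose_spec])
          have : p = (p.1, p.2) := rfl
          rw [this, h2, hj]
        · rintro rfl
          exact ⟨by simp [hs, (hfbij.2 c).choose_spec], rfl⟩
      have hbij :
          (Finset.univ.filter (fun p : Fin n × Fin m2 => D' p = c)).card
          = (Finset.univ.filter (fun p : Fin (n+1) × Fin m2 => D p = c ∧ p.1 ≠ s p.2)).card := by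
        apply Finset.card_bij (fun p _ => ((s p.2).succAbove p.1, p.2))
        · intro p hp
          simp only [Finset.mem_filter, Finset.mem_univ, true_and] at hp ⊢
          exact ⟨hp, Fin.succAbove_ne _ _⟩
        · intro p hp q hq h
          simp only [Prod.mk.injEq] at h
          obtain ⟨h1, h2⟩ := h
          have : p.1 = q.1 := by
            apply Fin.succAbove_right_injective (p := s p.2)
            rw [h1, h2]
          exact Prod.ext this h2
        · intro p hp
          simp only [Finset.mem_filter, Finset.mem_univ, true_and] at hp
          obtain ⟨h1, h2⟩ := hp
          obtain ⟨i, hi⟩ := Fin.exists_succAbove_eq h2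
          refine ⟨(i, p.2), ?_, ?_⟩
          · simp only [Finset.mem_filter, Finset.mem_univ, true_and, hD']
            rw [hi]; exact h1
          · simp [hi]
      omega
    obtain ⟨t', ht'col, ht'row⟩ := ih D' hD'c
    set t : Fin (n+1) → Fin m2 → Fin (n+1) :=
      fun i j => Fin.cases (s j) (fun i' => (s j).succAbove (t' i' j)) i with ht
    refine ⟨t, ?_, ?_⟩
    · intro j
      apply Finite.injective_iff_bijective.mp
      intro a b hab
      induction a using Fin.cases with
      | zero =>
        induction b using Fin.cases with
        | zero => rfl
        | succ b' => simp [ht] at hab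
      | succ a' =>
        induction b using Fin.cases with
        | zero => simp [ht] at hab
        | succ b' =>
          simp only [ht, Fin.cases_succ] at hab
          have := Fin.succAbove_right_injective (p := s j) hab
          exact congrArg Fin.succ ((ht'col j).1 this)
    · intro i
      induction i using Fin.cases with
      | zero =>
        have : (fun j => D (t 0 j, j)) = f := by
          funext j; simp [ht, hs]
        rw [this]; exact hfbij
      | succ i' =>
        have : (fun j => D (t i'.succ j, j)) = fun j => D' (t' i' j, j) := by
          funext j; simp [ht, hD']
        rw [this]; exact ht'row i'
theorem rubik_table (m1 m2 : ℕ) (σ : Equiv.Perm (Fin m1 × Fin m2)) :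
    ∃ (f1 : Fin m2 → Equiv.Perm (Fin m1))
      (g : Fin m1 → Equiv.Perm (Fin m2))
      (f2 : Fin m2 → Equiv.Perm (Fin m1)),
      ∀ i : Fin m1, ∀ j : Fin m2,
        σ (i, j) =
          (let c1 : Fin m1 × Fin m2 := (f1 j i, j)
           let r : Fin m1 × Fin m2 := (c1.1, g c1.1 c1.2)
           (f2 r.2 r.1, r.2)) := by
  classical
  set D : Fin m1 × Fin m2 → Fin m2 := fun p => (σ p).2 with hDdef
  have hcount : ∀ c, (Finset.univ.filter (fun p : Fin m1 × Fin m2 => D p = c)).card = m1 := by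
    intro c
    have h1 : (Finset.univ.filter (fun p : Fin m1 × Fin m2 => D p = c)).card
        = (Finset.univ.filter (fun q : Fin m1 × Fin m2 => q.2 = c)).card := by
      apply Finset.card_bij (fun p _ => σ p)
      · intro p hp
        simp only [Finset.mem_filter, Finset.mem_univ, true_and, hDdef] at hp ⊢
        exact hp
      · intro p _ q _ h
        exact σ.injective h
      · intro q hq
        refine ⟨σ.symm q, ?_, by simp⟩
        simp only [Finset.mem_filter, Finset.mem_univ, true_and, hDdef, Equiv.apply_symm_apply] at hq ⊢
        exact hq
    have h2 : (Finset.univ.filter (fun q : Fin m1 × Fin m2 => q.2 = c))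
        = Finset.univ ×ˢ {c} := by
      ext ⟨a, b⟩
      simp [Finset.mem_product, eq_comm]
    rw [h1, h2, Finset.card_product]
    simp
  obtain ⟨t, hcol, hrow⟩ := rubik_key m2 m1 D hcount
  set e1 : Fin m2 → (Fin m1 ≃ Fin m1) :=
    fun j => Equiv.ofBijective (fun i => t i j) (hcol j) with he1
  set g : Fin m1 → Equiv.Perm (Fin m2) :=
    fun i' => Equiv.ofBijective (fun j => D (t i' j, j)) (hrow i') with hg
  have hf2inj : ∀ c : Fin m2, Function.Injective
      (fun i' : Fin m1 => (σ (t i' ((g i').symm c), (g i').symm c)).1) := by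
    intro c i' i'' h
    have hsnd : ∀ b : Fin m1, (σ (t b ((g b).symm c), (g b).symm c)).2 = c := by
      intro b
      exact (g b).apply_symm_apply c
    have hσeq : σ (t i' ((g i').symm c), (g i').symm c)
        = σ (t i'' ((g i'').symm c), (g i'').symm c) := by
      apply Prod.ext
      · exact h
      · rw [hsnd, hsnd]
    have hpeq := σ.injective hσeq
    have hj : (g i').symm c = (g i'').symm c := congrArg Prod.snd hpeq
    have ht' : t i' ((g i').symm c) = t i'' ((g i').symm c) := by
      have := congrArg Prod.fst hpeq
      simpa [hj] using this
    exact (hcol ((g i').symm c)).1 ht'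
  set f2 : Fin m2 → Equiv.Perm (Fin m1) :=
    fun c => Equiv.ofBijective _ (Finite.injective_iff_bijective.mp (hf2inj c)) with hf2
  refine ⟨fun j => (e1 j).symm, g, f2, ?_⟩
  intro i j
  simp only []
  set i' : Fin m1 := (e1 j).symm i with hi'
  have hti : t i' j = i := (e1 j).apply_symm_apply i
  have hgij : g i' j = (σ (i, j)).2 := by
    show D (t i' j, j) = (σ (i, j)).2
    rw [hti]
  have hjback : (g i').symm (g i' j) = j := (g i').symm_apply_apply j
  have hfst : f2 (g i' j) i' = (σ (i, j)).1 := by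
    show (σ (t i' ((g i').symm (g i' j)), (g i').symm (g i' j))).1 = (σ (i, j)).1
    rw [hjback, hti]
  apply Prod.ext
  · exact hfst.symm
  · exact hgij.symm
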